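/- Let μ>0 and let φ:[0,∞)→[0,∞) be measurable with Λ = ∫₀^∞ φ(s) ds < 1. Let m be the unique nondecreasing locally bounded solution of m_t = μt + ∫₀ᵗ φ(t−s) m_s ds (which is of class C¹ on [0,∞)). Then, as t→∞, m′_t → μ/(1−Λ) and m_t/t → μ/(1−Λ). -/

import Mathlib

open MeasureTheory Set Filter Topology intervalIntegral

section Aux
variable {φ : ℝ → ℝ}

lemma conv_rw (φ m : ℝ → ℝ) (t : ℝ) :
    (∫ s in (0:ℝ)..t, φ (t - s) * m s) = ∫ u in (0:ℝ)..t, φ u * m (t - u) := by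
  have h := intervalIntegral.integral_comp_sub_left (a := (0:ℝ)) (b := t)
    (fun u => φ u * m (t - u)) t
  simp only [sub_sub_cancel, sub_zero, sub_self] at h
  exact h

lemma conv_integrable (hφmeas : Measurable φ)
    (hφ0 : ∀ t : ℝ, 0 ≤ t → 0 ≤ φ t)
    (hφint : IntegrableOn φ (Ioi 0)) (g : ℝ → ℝ) (hg : ContinuousOn g (Ici 0))
    (a b T : ℝ) (ha : 0 ≤ a) (hab : a ≤ b) (hbT : b ≤ T) :
    IntegrableOn (fun u => φ u * g (T - u)) (Ioc a b) := by
  have hmaps : ∀ u ∈ Icc a b, T - u ∈ Ici (0:ℝ) := by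
    intro u hu; simp only [mem_Ici]; linarith [hu.2]
  have hcont : ContinuousOn (fun u => g (T - u)) (Icc a b) :=
    hg.comp ((continuous_const.sub continuous_id).continuousOn)
      (fun u hu => by simpa using hmaps u hu)
  obtain ⟨M, hM⟩ : ∃ M, ∀ u ∈ Icc a b, |g (T - u)| ≤ M := by
    rcases isCompact_Icc.exists_isMaxOn (s := Icc a b) (nonempty_Icc.2 hab)
      hcont.abs with ⟨x, _, hx⟩
    exact ⟨_, fun u hu => hx hu⟩
  have hφi : IntegrableOn φ (Ioc a b) :=
    hφint.mono_set (fun x hx => lt_of_le_of_lt ha hx.1)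
  apply Integrable.mono' (g := fun u => M * φ u) (hφi.const_mul M)
  · exact (hφmeas.aemeasurable.aestronglyMeasurable).mul
      (((hcont.mono Ioc_subset_Icc_self).aemeasurable measurableSet_Ioc).aestronglyMeasurable)
  · filter_upwards [ae_restrict_mem measurableSet_Ioc] with u hu
    have h1 : 0 ≤ φ u := hφ0 u (ha.trans hu.1.le)
    have h2 : |g (T - u)| ≤ M := hM u ⟨hu.1.le, hu.2⟩
    rw [Real.norm_eq_abs, abs_mul, abs_of_nonneg h1]
    calc φ u * |g (T - u)| ≤ φ u * M := mul_le_mul_of_nonneg_left h2 h1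
      _ = M * φ u := mul_comm _ _

lemma conv_intervalIntegrable (hφmeas : Measurable φ)
    (hφ0 : ∀ t : ℝ, 0 ≤ t → 0 ≤ φ t)
    (hφint : IntegrableOn φ (Ioi 0)) (g : ℝ → ℝ) (hg : ContinuousOn g (Ici 0))
    (a b T : ℝ) (ha : 0 ≤ a) (hab : a ≤ b) (hbT : b ≤ T) :
    IntervalIntegrable (fun u => φ u * g (T - u)) volume a b :=
  (intervalIntegrable_iff_integrableOn_Ioc_of_le hab).2
    (conv_integrable hφmeas hφ0 hφint g hg a b T ha hab hbT)

lemma phi_intervalIntegrable (hφint : IntegrableOn φ (Ioi 0)) (a b : ℝ) (ha : 0 ≤ a)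
    (hab : a ≤ b) : IntervalIntegrable φ volume a b :=
  (intervalIntegrable_iff_integrableOn_Ioc_of_le hab).2
    (hφint.mono_set (fun x hx => lt_of_le_of_lt ha hx.1))

end Aux

lemma slope_tendsto (m m' : ℝ → ℝ)
    (hderiv : ∀ t ∈ Ici (0:ℝ), HasDerivWithinAt m (m' t) (Ici 0) t)
    (a : ℝ) (ha : 0 ≤ a) :
    Tendsto (fun h => (m (a + h) - m a) / h) (𝓝[>] (0:ℝ)) (𝓝 (m' a)) := by
  have H := hasDerivWithinAt_iff_tendsto_slope.1 (hderiv a ha)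
  have hmap : Tendsto (fun h : ℝ => a + h) (𝓝[>] 0) (𝓝[Ici 0 \ {a}] a) := by
    rw [tendsto_nhdsWithin_iff]
    constructor
    · have : Tendsto (fun h : ℝ => a + h) (𝓝 0) (𝓝 (a + 0)) :=
        (continuous_const.add continuous_id).tendsto 0
      simpa using this.mono_left nhdsWithin_le_nhds
    · filter_upwards [self_mem_nhdsWithin] with h hh
      have : (0:ℝ) < h := hh
      exact ⟨mem_Ici.2 (by linarith), by simp; intro hc; simp [hc] at this⟩
  have := H.comp hmap
  refine this.congr (fun h => ?_)
  simp only [Function.comp_apply, slope_def_field]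
  norm_num

lemma deriv_renewal (μ : ℝ) (φ : ℝ → ℝ) (hφmeas : Measurable φ)
    (hφ0 : ∀ t : ℝ, 0 ≤ t → 0 ≤ φ t) (hφint : IntegrableOn φ (Ioi 0))
    (m m' : ℝ → ℝ) (hmono : MonotoneOn m (Ici 0))
    (heq : ∀ t : ℝ, 0 ≤ t → m t = μ * t + ∫ s in (0:ℝ)..t, φ (t - s) * m s)
    (hderiv : ∀ t ∈ Ici (0:ℝ), HasDerivWithinAt m (m' t) (Ici 0) t)
    (hderiv_cont : ContinuousOn m' (Ici 0))
    (t : ℝ) (ht : 0 ≤ t) :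
    m' t = μ + ∫ u in (0:ℝ)..t, φ u * m' (t - u) := by
  have hmc : ContinuousOn m (Ici 0) := fun x hx => (hderiv x hx).continuousWithinAt
  have hm0 : m 0 = 0 := by simpa using heq 0 le_rfl
  -- bound C for m' on [0, t+1]
  obtain ⟨C, hC0, hC⟩ : ∃ C, 0 ≤ C ∧ ∀ x ∈ Icc (0:ℝ) (t+1), |m' x| ≤ C := by
    have hcont : ContinuousOn (fun x => |m' x|) (Icc 0 (t+1)) :=
      (hderiv_cont.mono (fun x hx => hx.1)).abs
    rcases isCompact_Icc.exists_isMaxOn (s := Icc (0:ℝ) (t+1))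
      (nonempty_Icc.2 (by linarith)) hcont with ⟨x0, hx0, hx⟩
    exact ⟨_, abs_nonneg _, fun u hu => hx hu⟩
  have hlip : ∀ x ∈ Icc (0:ℝ) (t+1), ∀ y ∈ Icc (0:ℝ) (t+1), |m y - m x| ≤ C * |y - x| := by
    intro x hx y hy
    have := Convex.norm_image_sub_le_of_norm_hasDerivWithin_le
      (f := m) (f' := m') (s := Icc (0:ℝ) (t+1))
      (fun z hz => (hderiv z hz.1).mono (fun w hw => hw.1))
      (fun z hz => hC z hz) (convex_Icc _ _) hx hy
    simpa [Real.norm_eq_abs] using this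
  set l : Filter ℝ := 𝓝[>] (0:ℝ) with hl
  -- key identity
  have key : ∀ h : ℝ, 0 < h →
      (m (t + h) - m t) / h =
        μ + (∫ u in (0:ℝ)..t, φ u * ((m (t + h - u) - m (t - u)) / h)) +
          h⁻¹ * ∫ u in t..(t + h), φ u * m (t + h - u) := by
    intro h hh
    have h1 := heq (t + h) (by linarith)
    have h2 := heq t ht
    rw [conv_rw] at h1 h2
    have i1 : IntervalIntegrable (fun u => φ u * m (t + h - u)) volume 0 t :=
      conv_intervalIntegrable hφmeas hφ0 hφint m hmc 0 t (t + h) le_rfl ht (by linarith)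
    have i2 : IntervalIntegrable (fun u => φ u * m (t + h - u)) volume t (t + h) :=
      conv_intervalIntegrable hφmeas hφ0 hφint m hmc t (t + h) (t + h) ht (by linarith) le_rfl
    have i3 : IntervalIntegrable (fun u => φ u * m (t - u)) volume 0 t :=
      conv_intervalIntegrable hφmeas hφ0 hφint m hmc 0 t t le_rfl ht le_rfl
    have hsplit : (∫ u in (0:ℝ)..(t + h), φ u * m (t + h - u)) =
        (∫ u in (0:ℝ)..t, φ u * m (t + h - u)) + ∫ u in t..(t + h), φ u * m (t + h - u) :=
      (intervalIntegral.integral_add_adjacent_intervals i1 i2).symm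
    have hdiff : (∫ u in (0:ℝ)..t, φ u * ((m (t + h - u) - m (t - u)) / h)) =
        h⁻¹ * ((∫ u in (0:ℝ)..t, φ u * m (t + h - u)) - ∫ u in (0:ℝ)..t, φ u * m (t - u)) := by
      rw [← intervalIntegral.integral_sub i1 i3, ← intervalIntegral.integral_const_mul]
      apply intervalIntegral.integral_congr
      intro u hu
      field_simp
    rw [hdiff]
    have hne : h ≠ 0 := ne_of_gt hh
    field_simp
    nlinarith [h1, h2, hsplit]
  -- T2 : dominated convergence
  have T2 : Tendsto (fun h => ∫ u in (0:ℝ)..t, φ u * ((m (t + h - u) - m (t - u)) / h)) l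
      (𝓝 (∫ u in (0:ℝ)..t, φ u * m' (t - u))) := by
    apply intervalIntegral.tendsto_integral_filter_of_dominated_convergence
      (bound := fun u => C * φ u)
    · filter_upwards [self_mem_nhdsWithin] with h (hh : (0:ℝ) < h)
      have huIoc : Set.uIoc (0:ℝ) t = Ioc 0 t := uIoc_of_le ht
      rw [huIoc]
      have c1 : ContinuousOn (fun u => m (t + h - u)) (Ioc 0 t) :=
        hmc.comp ((continuous_const.sub continuous_id).continuousOn)
          (fun u hu => by simp only [mem_Ici, id_eq]; linarith [hu.2])
      have c2 : ContinuousOn (fun u => m (t - u)) (Ioc 0 t) :=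
        hmc.comp ((continuous_const.sub continuous_id).continuousOn)
          (fun u hu => by simp only [mem_Ici, id_eq]; linarith [hu.2])
      exact (hφmeas.aemeasurable.aestronglyMeasurable).mul
        ((((c1.aemeasurable measurableSet_Ioc).sub
          (c2.aemeasurable measurableSet_Ioc)).div_const h).aestronglyMeasurable)
    · have hmem : Ioo (0:ℝ) 1 ∈ l := Ioo_mem_nhdsGT_of_mem (by norm_num)
      filter_upwards [hmem] with h hh
      apply Filter.Eventually.of_forall
      intro x hx
      rw [uIoc_of_le ht] at hx
      have hx1 : 0 < x := hx.1
      have hx2 : x ≤ t := hx.2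
      have ha : t - x ∈ Icc (0:ℝ) (t+1) := ⟨by linarith, by linarith⟩
      have hb : t + h - x ∈ Icc (0:ℝ) (t+1) := ⟨by linarith [hh.1], by linarith [hh.2]⟩
      have hd : |m (t + h - x) - m (t - x)| ≤ C * h := by
        have := hlip (t - x) ha (t + h - x) hb
        have he : |t + h - x - (t - x)| = h := by rw [abs_of_nonneg] <;> [skip; linarith [hh.1]] ; ring_nf
        rw [he] at this
        exact this
      rw [Real.norm_eq_abs, abs_mul, abs_div, abs_of_pos hh.1,
        abs_of_nonneg (hφ0 x hx1.le)]
      calc φ x * (|m (t + h - x) - m (t - x)| / h) ≤ φ x * C := by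
            apply mul_le_mul_of_nonneg_left _ (hφ0 x hx1.le)
            rw [div_le_iff₀ hh.1]
            linarith [hd]
        _ = C * φ x := mul_comm _ _
    · exact (phi_intervalIntegrable hφint 0 t le_rfl ht).const_mul C
    · apply Filter.Eventually.of_forall
      intro x hx
      rw [uIoc_of_le ht] at hx
      have hx2 : 0 ≤ t - x := by linarith [hx.2]
      have := (slope_tendsto m m' hderiv (t - x) hx2).const_mul (φ x)
      refine this.congr (fun h => ?_)
      have : t - x + h = t + h - x := by ring
      rw [this]
  -- T3 : boundary term tends to 0
  have hφIcc : IntegrableOn φ (Icc t (t + 1)) := by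
    rw [integrableOn_Icc_iff_integrableOn_Ioc]
    exact hφint.mono_set (fun x hx => lt_of_le_of_lt ht hx.1)
  have hprim : ContinuousOn (fun x => ∫ u in Ioc t x, φ u) (Icc t (t + 1)) :=
    intervalIntegral.continuousOn_primitive hφIcc
  have hP0 : (∫ u in Ioc t t, φ u) = 0 := by simp
  have hPt : Tendsto (fun h => ∫ u in Ioc t (t + h), φ u) l (𝓝 0) := by
    have hmapP : Tendsto (fun h : ℝ => t + h) l (𝓝[Icc t (t+1)] t) := by
      rw [tendsto_nhdsWithin_iff]
      constructor
      · have : Tendsto (fun h : ℝ => t + h) (𝓝 0) (𝓝 (t + 0)) :=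
          (continuous_const.add continuous_id).tendsto 0
        simpa using this.mono_left nhdsWithin_le_nhds
      · filter_upwards [Ioo_mem_nhdsGT_of_mem (show (0:ℝ) ∈ Ico (0:ℝ) 1 by norm_num)]
          with h hh
        exact ⟨by linarith [hh.1], by linarith [hh.2]⟩
    have := (hprim t (left_mem_Icc.2 (by linarith))).tendsto.comp hmapP
    rw [hP0] at this
    exact this
  have T3 : Tendsto (fun h => h⁻¹ * ∫ u in t..(t + h), φ u * m (t + h - u)) l (𝓝 0) := by
    apply squeeze_zero'
    · filter_upwards [self_mem_nhdsWithin] with h (hh : (0:ℝ) < h)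
      apply mul_nonneg (by positivity)
      apply intervalIntegral.integral_nonneg (by linarith)
      intro u hu
      apply mul_nonneg (hφ0 u (by linarith [hu.1]))
      have : m 0 ≤ m (t + h - u) := hmono (mem_Ici.2 le_rfl)
        (mem_Ici.2 (by linarith [hu.2])) (by linarith [hu.2])
      linarith [hm0 ▸ this]
    · filter_upwards [Ioo_mem_nhdsGT_of_mem (show (0:ℝ) ∈ Ico (0:ℝ) 1 by norm_num)]
        with h hh
      have hint1 : IntervalIntegrable (fun u => φ u * m (t + h - u)) volume t (t + h) :=
        conv_intervalIntegrable hφmeas hφ0 hφint m hmc t (t + h) (t + h) ht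
          (by linarith [hh.1]) le_rfl
      have hint2 : IntervalIntegrable (fun u => C * h * φ u) volume t (t + h) :=
        (phi_intervalIntegrable hφint t (t + h) ht (by linarith [hh.1])).const_mul _
      have hmono2 : (∫ u in t..(t + h), φ u * m (t + h - u)) ≤
          ∫ u in t..(t + h), C * h * φ u := by
        apply intervalIntegral.integral_mono_on (by linarith [hh.1]) hint1 hint2
        intro u hu
        have hu1 : t ≤ u := hu.1
        have hu2 : u ≤ t + h := hu.2
        have hmb : m (t + h - u) ≤ C * h := by
          have := hlip 0 (left_mem_Icc.2 (by linarith)) (t + h - u)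
            (⟨by linarith, by linarith [hh.2]⟩)
          rw [hm0, sub_zero, sub_zero] at this
          have habs : |t + h - u| = t + h - u := abs_of_nonneg (by linarith)
          rw [habs] at this
          calc m (t + h - u) ≤ |m (t + h - u)| := le_abs_self _
            _ ≤ C * (t + h - u) := this
            _ ≤ C * h := by nlinarith
        calc φ u * m (t + h - u) ≤ φ u * (C * h) :=
              mul_le_mul_of_nonneg_left hmb (hφ0 u (by linarith))
          _ = C * h * φ u := by ring
      calc h⁻¹ * ∫ u in t..(t + h), φ u * m (t + h - u)
          ≤ h⁻¹ * ∫ u in t..(t + h), C * h * φ u := by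
            exact mul_le_mul_of_nonneg_left hmono2 (inv_nonneg.2 hh.1.le)
        _ = C * ∫ u in Ioc t (t + h), φ u := by
            rw [intervalIntegral.integral_const_mul,
              intervalIntegral.integral_of_le (by linarith [hh.1])]
            have hne : h ≠ 0 := ne_of_gt hh.1
            field_simp
    · simpa using hPt.const_mul C
  have T1 := slope_tendsto m m' hderiv t ht
  have TR : Tendsto (fun h => (m (t + h) - m t) / h) l
      (𝓝 ((μ + ∫ u in (0:ℝ)..t, φ u * m' (t - u)) + 0)) := by
    apply Tendsto.congr' _ ((tendsto_const_nhds.add T2).add T3)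
    filter_upwards [self_mem_nhdsWithin] with h (hh : (0:ℝ) < h)
    exact (key h hh).symm
  rw [add_zero] at TR
  exact tendsto_nhds_unique T1 TR
lemma mprime_nonneg (m m' : ℝ → ℝ) (hmono : MonotoneOn m (Ici 0))
    (hderiv : ∀ t ∈ Ici (0:ℝ), HasDerivWithinAt m (m' t) (Ici 0) t)
    (t : ℝ) (ht : 0 ≤ t) : 0 ≤ m' t := by
  apply ge_of_tendsto (slope_tendsto m m' hderiv t ht)
  filter_upwards [self_mem_nhdsWithin] with h (hh : (0:ℝ) < h)
  apply div_nonneg _ hh.le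
  have := hmono (mem_Ici.2 ht) (mem_Ici.2 (show (0:ℝ) ≤ t + h by linarith))
    (by linarith : t ≤ t + h)
  linarith

theorem stmt5 (μ : ℝ) (hμ : 0 < μ) (φ : ℝ → ℝ)
    (hφmeas : Measurable φ)
    (hφ0 : ∀ t : ℝ, 0 ≤ t → 0 ≤ φ t)
    (hφint : IntegrableOn φ (Ioi 0))
    (hΛ : (∫ s in Ioi (0:ℝ), φ s) < 1)
    (m m' : ℝ → ℝ)
    (hmono : MonotoneOn m (Ici 0))
    (hlb : ∀ T : ℝ, 0 ≤ T → ∃ M : ℝ, ∀ t ∈ Icc (0:ℝ) T, m t ≤ M)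
    (heq : ∀ t : ℝ, 0 ≤ t → m t = μ * t + ∫ s in (0:ℝ)..t, φ (t - s) * m s)
    (hderiv : ∀ t ∈ Ici (0:ℝ), HasDerivWithinAt m (m' t) (Ici 0) t)
    (hderiv_cont : ContinuousOn m' (Ici 0)) :
    Tendsto m' atTop (𝓝 (μ / (1 - ∫ s in Ioi (0:ℝ), φ s))) ∧
    Tendsto (fun t => m t / t) atTop (𝓝 (μ / (1 - ∫ s in Ioi (0:ℝ), φ s))) := by
  set Λ : ℝ := ∫ s in Ioi (0:ℝ), φ s with hΛdef
  set c : ℝ := μ / (1 - Λ) with hcdef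
  have hΛ0 : 0 ≤ Λ :=
    setIntegral_nonneg measurableSet_Ioi (fun x hx => hφ0 x (le_of_lt hx))
  have h1Λ : 0 < 1 - Λ := by linarith
  have hc0 : 0 < c := div_pos hμ h1Λ
  have hmc : ContinuousOn m (Ici 0) := fun x hx => (hderiv x hx).continuousWithinAt
  have hφle : ∀ a b : ℝ, 0 ≤ a → (∫ u in Ioc a b, φ u) ≤ Λ := by
    intro a b ha
    apply setIntegral_mono_set hφint
    · filter_upwards [ae_restrict_mem measurableSet_Ioi] with x hx
      exact hφ0 x hx.le
    · exact HasSubset.Subset.eventuallyLE (fun x hx => lt_of_le_of_lt ha hx.1)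
  have hrenew : ∀ t : ℝ, 0 ≤ t → m' t = μ + ∫ u in (0:ℝ)..t, φ u * m' (t - u) :=
    fun t ht => deriv_renewal μ φ hφmeas hφ0 hφint m m' hmono heq hderiv hderiv_cont t ht
  have hnn : ∀ t : ℝ, 0 ≤ t → 0 ≤ m' t :=
    fun t ht => mprime_nonneg m m' hmono hderiv t ht
  -- upper bound m' ≤ c
  have hub : ∀ t : ℝ, 0 ≤ t → m' t ≤ c := by
    intro T hT
    obtain ⟨t₀, ht₀, hmax⟩ := isCompact_Icc.exists_isMaxOn (nonempty_Icc.2 hT)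
      (hderiv_cont.mono (fun x (hx : x ∈ Icc (0:ℝ) T) => hx.1))
    have h0t₀ : 0 ≤ t₀ := ht₀.1
    have hintle : (∫ u in (0:ℝ)..t₀, φ u * m' (t₀ - u)) ≤ Λ * m' t₀ := by
      have mono1 : (∫ u in (0:ℝ)..t₀, φ u * m' (t₀ - u)) ≤
          ∫ u in (0:ℝ)..t₀, φ u * m' t₀ := by
        apply intervalIntegral.integral_mono_on h0t₀
          (conv_intervalIntegrable hφmeas hφ0 hφint m' hderiv_cont 0 t₀ t₀ le_rfl h0t₀ le_rfl)
          ((phi_intervalIntegrable hφint 0 t₀ le_rfl h0t₀).mul_const _)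
        intro u hu
        apply mul_le_mul_of_nonneg_left _ (hφ0 u hu.1)
        exact hmax ⟨by linarith [hu.2], by linarith [hu.1, ht₀.2]⟩
      calc (∫ u in (0:ℝ)..t₀, φ u * m' (t₀ - u)) ≤ ∫ u in (0:ℝ)..t₀, φ u * m' t₀ := mono1
        _ = (∫ u in Ioc 0 t₀, φ u) * m' t₀ := by
            rw [intervalIntegral.integral_mul_const, intervalIntegral.integral_of_le h0t₀]
        _ ≤ Λ * m' t₀ := mul_le_mul_of_nonneg_right (hφle 0 t₀ le_rfl) (hnn t₀ h0t₀)
    have hS : m' t₀ ≤ c := by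
      have e := hrenew t₀ h0t₀
      rw [hcdef, le_div_iff₀ h1Λ]
      nlinarith [e, hintle]
    exact le_trans (hmax (right_mem_Icc.2 hT)) hS
  have hlbμ : ∀ t : ℝ, 0 ≤ t → μ ≤ m' t := by
    intro t ht
    rw [hrenew t ht]
    have : 0 ≤ ∫ u in (0:ℝ)..t, φ u * m' (t - u) := by
      apply intervalIntegral.integral_nonneg ht
      intro u hu
      exact mul_nonneg (hφ0 u hu.1) (hnn (t - u) (by linarith [hu.2]))
    linarith
  -- boundedness for limsup machinery
  have hbdd_le : IsBoundedUnder (· ≤ ·) atTop m' :=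
    isBoundedUnder_of_eventually_le (a := c) (eventually_atTop.2 ⟨0, fun t ht => hub t ht⟩)
  have hbdd_ge : IsBoundedUnder (· ≥ ·) atTop m' :=
    isBoundedUnder_of_eventually_ge (a := μ) (eventually_atTop.2 ⟨0, fun t ht => hlbμ t ht⟩)
  have hcob_ge : IsCoboundedUnder (· ≥ ·) atTop m' := hbdd_le.isCoboundedUnder_ge
  have hcob_le : IsCoboundedUnder (· ≤ ·) atTop m' := hbdd_ge.isCoboundedUnder_le
  set L : ℝ := limsup m' atTop with hLdef
  set l : ℝ := liminf m' atTop with hldef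
  have hμl : μ ≤ l := le_liminf_of_le hcob_ge (eventually_atTop.2 ⟨0, fun t ht => hlbμ t ht⟩)
  have hlL : l ≤ L := liminf_le_limsup hbdd_le hbdd_ge
  have hLc : L ≤ c := limsup_le_of_le hcob_le (eventually_atTop.2 ⟨0, fun t ht => hub t ht⟩)
  -- tail of the integral
  have htail : ∀ ε : ℝ, 0 < ε → ∃ A : ℝ, 1 ≤ A ∧ Λ - ε ≤ ∫ u in Ioc 0 A, φ u := by
    intro ε hε
    have hU : (⋃ n : ℕ, Ioc (0:ℝ) (n:ℝ)) = Ioi 0 := by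
      ext x
      simp only [mem_iUnion, mem_Ioc, mem_Ioi]
      constructor
      · rintro ⟨n, h1, _⟩; exact h1
      · intro hx; obtain ⟨n, hn⟩ := exists_nat_ge x; exact ⟨n, hx, hn⟩
    have hmono2 : Monotone (fun n : ℕ => Ioc (0:ℝ) (n:ℝ)) :=
      fun i j hij => Ioc_subset_Ioc le_rfl (by exact_mod_cast hij)
    have htnd := MeasureTheory.tendsto_setIntegral_of_monotone
      (fun i : ℕ => measurableSet_Ioc) hmono2 (hU ▸ hφint)
    rw [hU] at htnd
    have hev := htnd.eventually (lt_mem_nhds (show Λ - ε < Λ by linarith))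
    obtain ⟨n, hn⟩ := eventually_atTop.1 hev
    refine ⟨max (n:ℝ) 1, le_max_right _ _, ?_⟩
    have h1 : Λ - ε ≤ ∫ u in Ioc (0:ℝ) (n:ℝ), φ u := (hn n le_rfl).le
    have h2 : (∫ u in Ioc (0:ℝ) (n:ℝ), φ u) ≤ ∫ u in Ioc (0:ℝ) (max (n:ℝ) 1), φ u := by
      apply setIntegral_mono_set (hφint.mono_set (fun x hx => hx.1))
      · filter_upwards [ae_restrict_mem measurableSet_Ioc] with x hx
        exact hφ0 x hx.1.le
      · exact HasSubset.Subset.eventuallyLE (Ioc_subset_Ioc le_rfl (le_max_left _ _))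
    linarith
  -- upper estimate on limsup
  have hup : ∀ ε : ℝ, 0 < ε → L ≤ μ + Λ * (L + ε) + c * ε := by
    intro ε hε
    obtain ⟨A, hA1, hAint⟩ := htail ε hε
    have hA0 : (0:ℝ) ≤ A := by linarith
    have hev : ∀ᶠ s in atTop, m' s < L + ε :=
      eventually_lt_of_limsup_lt (lt_add_of_pos_right L hε) hbdd_le
    obtain ⟨T, hT⟩ := eventually_atTop.1 hev
    apply limsup_le_of_le hcob_le
    rw [eventually_atTop]
    refine ⟨max T 0 + A, fun t ht => ?_⟩
    have hT0 : T ≤ max T 0 := le_max_left _ _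
    have h00 : (0:ℝ) ≤ max T 0 := le_max_right _ _
    have ht0 : 0 ≤ t := by linarith
    have htA : A ≤ t := by linarith
    have htT : T ≤ t - A := by linarith
    rw [hrenew t ht0]
    have i1 : IntervalIntegrable (fun u => φ u * m' (t - u)) volume 0 A :=
      conv_intervalIntegrable hφmeas hφ0 hφint m' hderiv_cont 0 A t le_rfl hA0 htA
    have i2 : IntervalIntegrable (fun u => φ u * m' (t - u)) volume A t :=
      conv_intervalIntegrable hφmeas hφ0 hφint m' hderiv_cont A t t hA0 htA le_rfl
    have hsplit : (∫ u in (0:ℝ)..t, φ u * m' (t - u)) =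
        (∫ u in (0:ℝ)..A, φ u * m' (t - u)) + ∫ u in A..t, φ u * m' (t - u) :=
      (intervalIntegral.integral_add_adjacent_intervals i1 i2).symm
    have hLε0 : 0 ≤ L + ε := by linarith [hμl.trans hlL]
    have h1 : (∫ u in (0:ℝ)..A, φ u * m' (t - u)) ≤ Λ * (L + ε) := by
      calc (∫ u in (0:ℝ)..A, φ u * m' (t - u)) ≤ ∫ u in (0:ℝ)..A, φ u * (L + ε) := by
            apply intervalIntegral.integral_mono_on hA0 i1
              ((phi_intervalIntegrable hφint 0 A le_rfl hA0).mul_const _)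
            intro u hu
            exact mul_le_mul_of_nonneg_left
              (le_of_lt (hT (t - u) (by linarith [hu.2]))) (hφ0 u hu.1)
        _ = (∫ u in Ioc 0 A, φ u) * (L + ε) := by
            rw [intervalIntegral.integral_mul_const, intervalIntegral.integral_of_le hA0]
        _ ≤ Λ * (L + ε) := mul_le_mul_of_nonneg_right (hφle 0 A le_rfl) hLε0
    have h2 : (∫ u in A..t, φ u * m' (t - u)) ≤ c * ε := by
      have htail2 : (∫ u in Ioc A t, φ u) ≤ ε := by
        have hadd : (∫ u in (0:ℝ)..A, φ u) + (∫ u in A..t, φ u) = ∫ u in (0:ℝ)..t, φ u :=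
          intervalIntegral.integral_add_adjacent_intervals
            (phi_intervalIntegrable hφint 0 A le_rfl hA0)
            (phi_intervalIntegrable hφint A t hA0 htA)
        rw [intervalIntegral.integral_of_le hA0, intervalIntegral.integral_of_le htA,
          intervalIntegral.integral_of_le ht0] at hadd
        have := hφle 0 t le_rfl
        linarith
      calc (∫ u in A..t, φ u * m' (t - u)) ≤ ∫ u in A..t, φ u * c := by
            apply intervalIntegral.integral_mono_on htA i2
              ((phi_intervalIntegrable hφint A t hA0 htA).mul_const _)
            intro u hu
            exact mul_le_mul_of_nonneg_left (hub (t - u) (by linarith [hu.2]))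
              (hφ0 u (hA0.trans hu.1))
        _ = (∫ u in Ioc A t, φ u) * c := by
            rw [intervalIntegral.integral_mul_const, intervalIntegral.integral_of_le htA]
        _ ≤ ε * c := mul_le_mul_of_nonneg_right htail2 hc0.le
        _ = c * ε := mul_comm _ _
    linarith [hsplit, h1, h2]
  -- lower estimate on liminf
  have hdown : ∀ ε : ℝ, 0 < ε → ε < μ → μ + (Λ - ε) * (l - ε) ≤ l := by
    intro ε hε hεμ
    obtain ⟨A, hA1, hAint⟩ := htail ε hε
    have hA0 : (0:ℝ) ≤ A := by linarith
    have hev : ∀ᶠ s in atTop, l - ε < m' s :=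
      eventually_lt_of_lt_liminf (by linarith) hbdd_ge
    obtain ⟨T, hT⟩ := eventually_atTop.1 hev
    apply le_liminf_of_le hcob_ge
    rw [eventually_atTop]
    refine ⟨max T 0 + A, fun t ht => ?_⟩
    have hT0 : T ≤ max T 0 := le_max_left _ _
    have h00 : (0:ℝ) ≤ max T 0 := le_max_right _ _
    have ht0 : 0 ≤ t := by linarith
    have htA : A ≤ t := by linarith
    rw [hrenew t ht0]
    have i1 : IntervalIntegrable (fun u => φ u * m' (t - u)) volume 0 A :=
      conv_intervalIntegrable hφmeas hφ0 hφint m' hderiv_cont 0 A t le_rfl hA0 htA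
    have i2 : IntervalIntegrable (fun u => φ u * m' (t - u)) volume A t :=
      conv_intervalIntegrable hφmeas hφ0 hφint m' hderiv_cont A t t hA0 htA le_rfl
    have hsplit : (∫ u in (0:ℝ)..t, φ u * m' (t - u)) =
        (∫ u in (0:ℝ)..A, φ u * m' (t - u)) + ∫ u in A..t, φ u * m' (t - u) :=
      (intervalIntegral.integral_add_adjacent_intervals i1 i2).symm
    have hlε0 : 0 ≤ l - ε := by linarith
    have h2 : 0 ≤ ∫ u in A..t, φ u * m' (t - u) := by
      apply intervalIntegral.integral_nonneg htA
      intro u hu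
      exact mul_nonneg (hφ0 u (hA0.trans hu.1)) (hnn (t - u) (by linarith [hu.2]))
    have h1 : (Λ - ε) * (l - ε) ≤ ∫ u in (0:ℝ)..A, φ u * m' (t - u) := by
      calc (Λ - ε) * (l - ε) ≤ (∫ u in Ioc 0 A, φ u) * (l - ε) :=
            mul_le_mul_of_nonneg_right hAint hlε0
        _ = ∫ u in (0:ℝ)..A, φ u * (l - ε) := by
            rw [intervalIntegral.integral_mul_const, intervalIntegral.integral_of_le hA0]
        _ ≤ ∫ u in (0:ℝ)..A, φ u * m' (t - u) := by
            apply intervalIntegral.integral_mono_on hA0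
              ((phi_intervalIntegrable hφint 0 A le_rfl hA0).mul_const _) i1
            intro u hu
            exact mul_le_mul_of_nonneg_left
              (le_of_lt (hT (t - u) (by linarith [hu.2]))) (hφ0 u hu.1)
    linarith [hsplit, h1, h2]
  -- conclude L ≤ c and c ≤ l
  have hLc' : L ≤ μ + Λ * L := by
    by_contra hcon
    push_neg at hcon
    set δ := L - (μ + Λ * L) with hδdef
    have hδ : 0 < δ := by simp only [hδdef]; linarith
    have hΛc1 : 0 < Λ + c + 1 := by linarith
    have hε : 0 < δ / (Λ + c + 1) := div_pos hδ hΛc1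
    have := hup (δ / (Λ + c + 1)) hε
    have hkey : (Λ + c + 1) * (δ / (Λ + c + 1)) = δ := by field_simp
    nlinarith
  have hLfinal : L ≤ c := by
    rw [hcdef, le_div_iff₀ h1Λ]
    nlinarith
  have hlc' : μ + Λ * l ≤ l := by
    by_contra hcon
    push_neg at hcon
    set δ := (μ + Λ * l) - l with hδdef
    have hδ : 0 < δ := by simp only [hδdef]; linarith
    have hΛl1 : 0 < Λ + l + 1 := by linarith
    set ε := min (δ / (Λ + l + 1)) (μ / 2) with hεdef
    have hε1 : 0 < ε := lt_min (div_pos hδ hΛl1) (by linarith)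
    have hε2 : ε < μ := lt_of_le_of_lt (min_le_right _ _) (by linarith)
    have hεle : ε ≤ δ / (Λ + l + 1) := min_le_left _ _
    have hkey : (Λ + l + 1) * (δ / (Λ + l + 1)) = δ := by field_simp
    have := hdown ε hε1 hε2
    nlinarith [sq_nonneg ε, mul_le_mul_of_nonneg_left hεle (le_of_lt hΛl1)]
  have hlfinal : c ≤ l := by
    rw [hcdef, div_le_iff₀ h1Λ]
    nlinarith
  have hLeq : L = c := le_antisymm hLfinal (hlfinal.trans hlL)
  have hleq : l = c := le_antisymm (hlL.trans hLfinal) hlfinal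
  have part1 : Tendsto m' atTop (𝓝 c) :=
    tendsto_of_liminf_eq_limsup hleq hLeq hbdd_le hbdd_ge
  refine ⟨part1, ?_⟩
  -- Part 2 : Cesàro-type argument
  rw [Metric.tendsto_atTop]
  intro ε hε
  have hε' : 0 < ε / 2 := by linarith
  obtain ⟨T₀, hT₀⟩ := Metric.tendsto_atTop.1 part1 (ε / 2) hε'
  set T : ℝ := max T₀ 1 with hTdef
  have hT1 : (1:ℝ) ≤ T := le_max_right _ _
  have hT0 : (0:ℝ) ≤ T := by linarith
  have hTbnd : ∀ s : ℝ, T ≤ s → |m' s - c| < ε / 2 := by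
    intro s hs
    have := hT₀ s (le_trans (le_max_left _ _) hs)
    rwa [Real.dist_eq] at this
  set K : ℝ := |m T - c * T| with hKdef
  refine ⟨max (T + 1) (K / (ε / 2) + 1), fun t ht => ?_⟩
  have htT : T ≤ t := by
    have := le_trans (le_max_left (T+1) (K / (ε / 2) + 1)) ht
    linarith
  have ht1 : (1:ℝ) ≤ t := by linarith
  have ht0 : (0:ℝ) < t := by linarith
  have htK : K / (ε / 2) + 1 ≤ t := le_trans (le_max_right _ _) ht
  -- FTC
  have hFTC : (∫ y in T..t, m' y) = m t - m T := by
    apply intervalIntegral.integral_eq_sub_of_hasDeriv_right_of_le htT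
    · exact hmc.mono (fun x hx => le_trans hT0 hx.1)
    · intro x hx
      exact (hderiv x (le_trans hT0 hx.1.le)).mono
        (fun y (hy : x < y) => le_trans (le_trans hT0 hx.1.le) hy.le)
    · apply ContinuousOn.intervalIntegrable
      apply hderiv_cont.mono
      rw [uIcc_of_le htT]
      exact fun x hx => le_trans hT0 hx.1
  have hint_ub : (∫ y in T..t, m' y) ≤ (c + ε / 2) * (t - T) := by
    have : (∫ y in T..t, m' y) ≤ ∫ y in T..t, (c + ε / 2) := by
      apply intervalIntegral.integral_mono_on htT
        (by
          apply ContinuousOn.intervalIntegrable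
          apply hderiv_cont.mono
          rw [uIcc_of_le htT]
          exact fun x hx => le_trans hT0 hx.1)
        intervalIntegrable_const
      intro u hu
      have := hTbnd u hu.1
      have := abs_lt.1 this
      linarith [this.2]
    rw [intervalIntegral.integral_const, smul_eq_mul] at this
    rw [mul_comm]
    exact this
  have hint_lb : (c - ε / 2) * (t - T) ≤ ∫ y in T..t, m' y := by
    have : (∫ y in T..t, (c - ε / 2)) ≤ ∫ y in T..t, m' y := by
      apply intervalIntegral.integral_mono_on htT intervalIntegrable_const
        (by
          apply ContinuousOn.intervalIntegrable
          apply hderiv_cont.mono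
          rw [uIcc_of_le htT]
          exact fun x hx => le_trans hT0 hx.1)
      intro u hu
      have := abs_lt.1 (hTbnd u hu.1)
      linarith [this.1]
    rw [intervalIntegral.integral_const, smul_eq_mul] at this
    rw [mul_comm] at this
    exact this
  have habs : |m t - c * t| ≤ K + ε / 2 * t := by
    have h1 : |m t - m T - c * (t - T)| ≤ ε / 2 * (t - T) := by
      have e1 : (c + ε / 2) * (t - T) = c * (t - T) + ε / 2 * (t - T) := by ring
      have e2 : (c - ε / 2) * (t - T) = c * (t - T) - ε / 2 * (t - T) := by ring
      rw [abs_le]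
      constructor <;> linarith [hFTC, hint_ub, hint_lb]
    have h2 : m t - c * t = (m T - c * T) + (m t - m T - c * (t - T)) := by ring
    calc |m t - c * t| ≤ |m T - c * T| + |m t - m T - c * (t - T)| := by
          rw [h2]; exact abs_add_le _ _
      _ ≤ K + ε / 2 * (t - T) := by rw [hKdef]; linarith
      _ ≤ K + ε / 2 * t := by
          have : ε / 2 * (t - T) ≤ ε / 2 * t :=
            mul_le_mul_of_nonneg_left (by linarith) hε'.le
          linarith
  have hKt : K / t < ε / 2 := by
    rw [div_lt_iff₀ ht0]
    have hK0 : 0 ≤ K := abs_nonneg _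
    have e3 : ε / 2 * (K / (ε / 2)) = K := by field_simp
    have h4 : ε / 2 * (K / (ε / 2) + 1) ≤ ε / 2 * t :=
      mul_le_mul_of_nonneg_left htK hε'.le
    rw [mul_add, e3, mul_one] at h4
    linarith
  rw [Real.dist_eq]
  have : m t / t - c = (m t - c * t) / t := by field_simp
  rw [this, abs_div, abs_of_pos ht0]
  calc |m t - c * t| / t ≤ (K + ε / 2 * t) / t := by gcongr
    _ = K / t + ε / 2 * t / t := add_div _ _ _
    _ = K / t + ε / 2 := by rw [mul_div_assoc, div_self (ne_of_gt ht0), mul_one]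
    _ < ε / 2 + ε / 2 := by linarith [hKt]
    _ = ε := by ring
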